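/- Fix n ≥ 2 and m ≥ 2, and let f(G) = Σ_{k=1}^K w_k·h_k(Φ_k(G)) be a convex combination of elementary models for the row player on n×m games in which every potential function is linear, φ_k(x, y) = θ_x^k·x + θ_y^k·y. Then f is weakly non-strategic: there do not exist a precision λ > 0 and a dominance-responsive column-player behavioral model g on n×m games such that f(G) = QBR₁(g(G); λ, G) for every n×m game G. -/

import Mathlib

/-- A 2-player `n×m` normal-form game: a pair of payoff matrices
(row player's payoffs, column player's payoffs). -/
abbrev Game (n m : ℕ) := Matrix (Fin n) (Fin m) ℝ × Matrix (Fin n) (Fin m) ℝ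

/-- The logit quantal best response of the row player, with precision `lam`, to the
column mixed strategy `s` in a game whose row-player payoff matrix is `U1`. -/
noncomputable def QBR {n m : ℕ} (U1 : Matrix (Fin n) (Fin m) ℝ)
    (s : Fin m → ℝ) (lam : ℝ) (i : Fin n) : ℝ :=
  Real.exp (lam * ∑ j, s j * U1 i j) / ∑ i', Real.exp (lam * ∑ j, s j * U1 i' j)

/-- A column-player behavioral model `g` is dominance-responsive if there is a `ζ > 0`
such that in every game with a `ζ`-dominant column action `j⁺`, that action is the
strict mode of `g`'s prediction. -/
def DominanceResponsiveCol {n m : ℕ} (g : Game n m → Fin m → ℝ) : Prop :=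
  ∃ ζ : ℝ, 0 < ζ ∧ ∀ G : Game n m, ∀ jp : Fin m,
    (∀ j : Fin m, j ≠ jp → ∀ i : Fin n, G.2 i jp > G.2 i j + ζ) →
    ∀ j : Fin m, j ≠ jp → g G jp > g G j

open Finset

lemma blind_sum_const {ι : Type*} [DecidableEq ι] :
    ∀ (N : ℕ) (T : Finset ι), T.card ≤ N → T.Nonempty →
    ∀ (P : ℝ → ℝ) (B : ℝ), (∀ x, |P x| ≤ B) →
    ∀ (ψ : ι → (ι → ℝ) → ℝ),
      (∀ k ∈ T, ∀ (t : ι → ℝ) (s : ℝ), ψ k (Function.update t k s) = ψ k t) →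
      (∀ t : ι → ℝ, P (∑ k ∈ T, t k) = ∑ k ∈ T, ψ k t) →
      ∀ x y, P x = P y := by
  intro N
  induction N with
  | zero =>
    intro T hcard hne
    exact absurd (Finset.card_pos.mpr hne) (by omega)
  | succ N ih =>
    intro T hcard hne P B hB ψ hblind hid x y
    obtain ⟨k0, hk0⟩ := hne
    by_cases h1 : T = {k0}
    · subst h1
      have e : ∀ z : ℝ, P z = ψ k0 (Function.update (fun _ => 0) k0 z) := by
        intro z
        have := hid (Function.update (fun _ => 0) k0 z)
        simpa using this
      rw [e x, e y]
      have hmem : k0 ∈ ({k0} : Finset ι) := Finset.mem_singleton_self k0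
      calc ψ k0 (Function.update (fun _ => 0) k0 x)
          = ψ k0 (Function.update (Function.update (fun _ => 0) k0 y) k0 x) := by
            rw [Function.update_idem]
        _ = ψ k0 (Function.update (fun _ => 0) k0 y) := hblind k0 hmem _ x
    · set T' := T.erase k0 with hT'
      have hne' : T'.Nonempty := by
        rcases Finset.eq_singleton_or_nontrivial hk0 with h | h
        · exact absurd h h1
        · obtain ⟨a, ha, b, hb, hab⟩ := h
          rcases eq_or_ne a k0 with rfl | hak
          · exact ⟨b, Finset.mem_erase.mpr ⟨hab.symm, hb⟩⟩
          · exact ⟨a, Finset.mem_erase.mpr ⟨hak, ha⟩⟩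
      have hcard' : T'.card ≤ N := by
        have h2 : T'.card = T.card - 1 := Finset.card_erase_of_mem hk0
        have h3 : 1 ≤ T.card := Finset.card_pos.mpr ⟨k0, hk0⟩
        omega
      have hdiff : ∀ s : ℝ, ∀ u v : ℝ, (P (u + s) - P u) = (P (v + s) - P v) := by
        intro s
        refine ih T' hcard' hne' (fun z => P (z + s) - P z) (2 * B)
          (fun z => by
            have := hB (z + s); have := hB z
            calc |P (z + s) - P z| ≤ |P (z+s)| + |P z| := abs_sub _ _
              _ ≤ 2 * B := by linarith)
          (fun k t => ψ k (Function.update t k0 s) - ψ k (Function.update t k0 0))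
          ?_ ?_
        · intro k hk t s'
          have hkk0 : k ≠ k0 := (Finset.mem_erase.mp hk).1
          have hkT : k ∈ T := (Finset.mem_erase.mp hk).2
          have comm : ∀ z : ℝ, Function.update (Function.update t k s') k0 z
              = Function.update (Function.update t k0 z) k s' :=
            fun z => Function.update_comm hkk0 s' z t
          rw [comm s, comm 0, hblind k hkT _ s', hblind k hkT _ s']
        · intro t
          have ht1 := hid (Function.update t k0 s)
          have ht0 := hid (Function.update t k0 0)
          have hsum : ∀ z : ℝ, ∑ k ∈ T, (Function.update t k0 z) k
              = z + ∑ k ∈ T', t k := by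
            intro z
            rw [← Finset.sum_erase_add T _ hk0, Function.update_self]
            rw [add_comm]
            congr 1
            exact Finset.sum_congr rfl (fun k hk =>
              Function.update_of_ne (Finset.mem_erase.mp hk).1 z t)
          rw [hsum s, hsum 0] at *
          have hsplit : ∀ z : ℝ, ∑ k ∈ T, ψ k (Function.update t k0 z)
              = ψ k0 t + ∑ k ∈ T', ψ k (Function.update t k0 z) := by
            intro z
            rw [← Finset.sum_erase_add T _ hk0, hblind k0 hk0 t z, add_comm]
          rw [hsplit s] at ht1
          rw [hsplit 0] at ht0
          rw [zero_add] at ht0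
          have : P (s + ∑ k ∈ T', t k) - P (∑ k ∈ T', t k)
              = ∑ k ∈ T', (ψ k (Function.update t k0 s) - ψ k (Function.update t k0 0)) := by
            rw [Finset.sum_sub_distrib, ht1, ht0]; ring
          rw [← this]; ring_nf
      -- now conclude: the increment d s is 0 by boundedness
      have hstep : ∀ s u : ℝ, P (u + s) = P u + (P s - P 0) := by
        intro s u
        have := hdiff s u 0
        rw [zero_add] at this
        linarith
      have hzero : ∀ s : ℝ, P s = P 0 := by
        intro s
        by_contra hne0
        set d := P s - P 0 with hd
        have hdne : d ≠ 0 := fun hc => hne0 (by rw [hd] at hc; linarith)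
        have hiter : ∀ j : ℕ, P (j * s) = P 0 + j * d := by
          intro j
          induction j with
          | zero => simp
          | succ j hj =>
            have := hstep s (j * s)
            push_cast
            rw [add_one_mul, this, hj, ← hd]
            ring
        obtain ⟨j, hj⟩ := exists_nat_gt ((B + |P 0|) / |d|)
        have hdpos : 0 < |d| := abs_pos.mpr hdne
        have h5 : (B + |P 0|) < j * |d| := by
          rw [div_lt_iff₀ hdpos] at hj; linarith
        have h6 : |P (j * s)| ≤ B := hB _
        have h7 : |(j : ℝ) * d| ≤ B + |P 0| := by
          have : (j : ℝ) * d = P (j * s) - P 0 := by rw [hiter j]; ring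
          rw [this]
          calc |P (j*s) - P 0| ≤ |P (j*s)| + |P 0| := abs_sub _ _
            _ ≤ B + |P 0| := by linarith
        rw [abs_mul, Nat.abs_cast] at h7
        linarith
      rw [hzero x, hzero y]

set_option maxHeartbeats 2000000

/-- A convex combination of elementary models whose potential functions are all
linear (as in ElementaryNet) is weakly non-strategic: it cannot be written as
quantal best response, with any positive precision, to any dominance-responsive
column-player behavioral model. -/
theorem elementarynet_weakly_nonstrategic {n m K : ℕ}
    (hn : 2 ≤ n) (hm : 2 ≤ m)
    (w : Fin K → ℝ) (hw0 : ∀ k, 0 ≤ w k) (hw1 : ∑ k, w k = 1)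
    (θx θy : Fin K → ℝ)
    (h : Fin K → Matrix (Fin n) (Fin m) ℝ → Fin n → ℝ)
    (hprob : ∀ k X, (∀ i, 0 ≤ h k X i) ∧ ∑ i, h k X i = 1)
    (f : Game n m → Fin n → ℝ)
    (hf : ∀ (G : Game n m) (i : Fin n),
      f G i = ∑ k, w k * h k (fun a b => θx k * G.1 a b + θy k * G.2 a b) i) :
    ¬ ∃ lam : ℝ, 0 < lam ∧ ∃ g : Game n m → Fin m → ℝ,
        (∀ G : Game n m, (∀ j, 0 ≤ g G j) ∧ ∑ j, g G j = 1) ∧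
        DominanceResponsiveCol g ∧
        ∀ G : Game n m, f G = QBR G.1 (g G) lam := by
  classical
  rintro ⟨lam, hlam, g, hg, ⟨ζ, hζ, hdom⟩, hQ⟩
  have hgsum : ∀ G : Game n m, ∑ j, g G j = 1 := fun G => (hg G).2
  set i0 : Fin n := ⟨0, by omega⟩ with hi0def
  set i1 : Fin n := ⟨1, by omega⟩ with hi1def
  set j0 : Fin m := ⟨0, by omega⟩ with hj0def
  set j1 : Fin m := ⟨1, by omega⟩ with hj1def
  have hi01 : i0 ≠ i1 := by simp [hi0def, hi1def, Fin.ext_iff]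
  have hj01 : j0 ≠ j1 := by simp [hj0def, hj1def, Fin.ext_iff]
  -- Claim A : QBR against a column-constant row-payoff matrix
  have claimA : ∀ (a : Fin n → ℝ) (U2 : Matrix (Fin n) (Fin m) ℝ),
      f ((fun i _ => a i), U2) i0
        = Real.exp (lam * a i0) / ∑ i, Real.exp (lam * a i) := by
    intro a U2
    have h1 := congrFun (hQ ((fun i _ => a i), U2)) i0
    rw [h1]
    simp only [QBR]
    have hsml : ∀ i : Fin n, (∑ j, g ((fun i _ => a i), U2) j * a i) = a i := by
      intro i
      rw [← Finset.sum_mul, hgsum, one_mul]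
    congr 1
    · rw [hsml i0]
    · exact Finset.sum_congr rfl (fun i _ => by rw [hsml i])
  set T : Finset (Fin K) := Finset.univ.filter (fun k => θx k = 0 ∨ θy k ≠ 0) with hTdef
  set cc : Fin K → ℝ := fun k => if θy k = 0 then 0 else -θx k / θy k with hccdef
  have hker : ∀ k ∈ T, θx k + θy k * cc k = 0 := by
    intro k hk
    rcases Finset.mem_filter.mp hk with ⟨-, hk'⟩
    by_cases hy : θy k = 0
    · rcases hk' with hx | hy'
      · simp [hccdef, hy, hx]
      · exact absurd hy hy'
    · simp only [hccdef, if_neg hy]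
      field_simp
      ring
  have hTc : ∀ k, k ∉ T → θx k ≠ 0 ∧ θy k = 0 := by
    intro k hk
    simp only [hTdef, Finset.mem_filter, Finset.mem_univ, true_and] at hk
    push_neg at hk
    exact ⟨hk.1, hk.2⟩
  set QQ : (Fin n → ℝ) → ℝ :=
    fun a => Real.exp (lam * a i0) / ∑ i, Real.exp (lam * a i) with hQQdef
  set FF : (Fin n → ℝ) → ℝ :=
    fun a => ∑ k ∈ Tᶜ, w k * h k (fun i _ => θx k * a i) i0 with hFFdef
  have hexpsumpos : ∀ a : Fin n → ℝ, 0 < ∑ i, Real.exp (lam * a i) :=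
    fun a => Finset.sum_pos (fun i _ => Real.exp_pos _) ⟨i0, Finset.mem_univ i0⟩
  have hQQ0 : ∀ a, 0 ≤ QQ a :=
    fun a => div_nonneg (Real.exp_pos _).le (hexpsumpos a).le
  have hQQ1 : ∀ a, QQ a ≤ 1 := by
    intro a
    rw [hQQdef]
    apply div_le_one_of_le₀
    · exact Finset.single_le_sum (fun i _ => (Real.exp_pos (lam * a i)).le)
        (Finset.mem_univ i0)
    · exact (hexpsumpos a).le
  have hh01 : ∀ k X, 0 ≤ h k X i0 ∧ h k X i0 ≤ 1 := by
    intro k X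
    obtain ⟨hpos, hsum⟩ := hprob k X
    refine ⟨hpos i0, ?_⟩
    rw [← hsum]
    exact Finset.single_le_sum (fun i _ => hpos i) (Finset.mem_univ i0)
  have hFF0 : ∀ a, 0 ≤ FF a :=
    fun a => Finset.sum_nonneg (fun k _ => mul_nonneg (hw0 k) (hh01 k _).1)
  have hFFW : ∀ a, FF a ≤ ∑ k ∈ Tᶜ, w k := by
    intro a
    apply Finset.sum_le_sum
    intro k _
    calc w k * h k (fun i _ => θx k * a i) i0 ≤ w k * 1 :=
          mul_le_mul_of_nonneg_left (hh01 k _).2 (hw0 k)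
      _ = w k := mul_one _
  have hW1le : ∑ k ∈ Tᶜ, w k ≤ 1 := by
    rw [← hw1]
    exact Finset.sum_le_sum_of_subset_of_nonneg (Finset.subset_univ _)
      (fun k _ _ => hw0 k)
  -- Claim B : QQ - FF is a constant function
  have claimB : ∀ a a' : Fin n → ℝ, QQ a - FF a = QQ a' - FF a' := by
    intro a a'
    rcases Finset.eq_empty_or_nonempty T with hTe | hTne
    · have he : ∀ b : Fin n → ℝ, QQ b = FF b := by
        intro b
        have h2 := hf ((fun i _ => b i), 0) i0
        rw [claimA b 0] at h2
        have hQQeq : QQ b = Real.exp (lam * b i0) / ∑ i, Real.exp (lam * b i) := rfl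
        rw [hQQeq, h2, hFFdef]
        simp only []
        rw [hTe, Finset.compl_empty]
        apply Finset.sum_congr rfl
        intro k _
        have hmat : (fun (a2 : Fin n) (b2 : Fin m) =>
            θx k * ((fun i (_:Fin m) => b i, (0 : Matrix (Fin n) (Fin m) ℝ)).1 a2 b2)
            + θy k * ((fun i (_:Fin m) => b i, (0 : Matrix (Fin n) (Fin m) ℝ)).2 a2 b2))
            = (fun (i : Fin n) (_ : Fin m) => θx k * b i) := by
          funext i j
          simp
        rw [hmat]
      rw [he a, he a']
      ring
    · set α : Fin n → ℝ := fun i => a' i - a i with hαdef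
      set P : ℝ → ℝ :=
        fun σ => QQ (fun i => a i + σ * α i) - FF (fun i => a i + σ * α i) with hPdef
      have hPB : ∀ x, |P x| ≤ 2 := by
        intro x
        rw [hPdef]
        have q0 := hQQ0 (fun i => a i + x * α i)
        have q1 := hQQ1 (fun i => a i + x * α i)
        have f0 := hFF0 (fun i => a i + x * α i)
        have f1 := le_trans (hFFW (fun i => a i + x * α i)) hW1le
        rw [abs_le]
        constructor <;> simp only [] <;> linarith
      set ψ : Fin K → (Fin K → ℝ) → ℝ := fun k t =>
        w k * h k (fun i _ => θx k * (a i + (∑ l ∈ T, t l) * α i)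
                            + θy k * ((∑ l ∈ T, t l * cc l) * α i)) i0 with hψdef
      have hblind : ∀ k ∈ T, ∀ (t : Fin K → ℝ) (s : ℝ),
          ψ k (Function.update t k s) = ψ k t := by
        intro k hk t s
        rw [hψdef]
        simp only []
        congr 2
        funext i j
        have e1 : ∑ l ∈ T, (Function.update t k s) l = (∑ l ∈ T, t l) + (s - t k) := by
          rw [Finset.sum_update_of_mem hk, ← Finset.sum_erase_add T t hk,
            Finset.sdiff_singleton_eq_erase]
          ring
        have e2 : ∑ l ∈ T, (Function.update t k s) l * cc l
            = (∑ l ∈ T, t l * cc l) + (s - t k) * cc k := by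
          rw [← Finset.sum_erase_add T _ hk, ← Finset.sum_erase_add T (fun l => t l * cc l) hk,
            Function.update_self]
          have : ∑ l ∈ T.erase k, (Function.update t k s) l * cc l
              = ∑ l ∈ T.erase k, t l * cc l := by
            apply Finset.sum_congr rfl
            intro l hl
            rw [Function.update_of_ne (Finset.mem_erase.mp hl).1]
          rw [this]
          ring
        rw [e1, e2]
        linear_combination ((s - t k) * α i) * hker k hk
      have hid : ∀ t : Fin K → ℝ, P (∑ k ∈ T, t k) = ∑ k ∈ T, ψ k t := by
        intro t
        have hA := claimA (fun i => a i + (∑ l ∈ T, t l) * α i)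
          (fun i _ => (∑ l ∈ T, t l * cc l) * α i)
        have hF := hf ((fun i _ => a i + (∑ l ∈ T, t l) * α i),
          (fun i _ => (∑ l ∈ T, t l * cc l) * α i)) i0
        rw [hA] at hF
        -- hF : QQ-expression = total sum; split into T and Tᶜ
        have hsplit : (∑ k, w k * h k (fun i j =>
              θx k * (a i + (∑ l ∈ T, t l) * α i)
              + θy k * ((∑ l ∈ T, t l * cc l) * α i)) i0)
            = (∑ k ∈ T, ψ k t) + FF (fun i => a i + (∑ l ∈ T, t l) * α i) := by
          rw [← Finset.sum_add_sum_compl T]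
          congr 1
          rw [hFFdef]
          apply Finset.sum_congr rfl
          intro k hk
          obtain ⟨hx, hy⟩ := hTc k (by simpa using hk)
          have hmat : (fun (i : Fin n) (j : Fin m) =>
              θx k * (a i + (∑ l ∈ T, t l) * α i) + θy k * ((∑ l ∈ T, t l * cc l) * α i))
              = (fun (i : Fin n) (_ : Fin m) => θx k * (a i + (∑ l ∈ T, t l) * α i)) := by
            funext i j
            rw [hy]
            ring
          simp only [hmat]
        rw [hsplit] at hF
        have hQQeq : QQ (fun i => a i + (∑ l ∈ T, t l) * α i)
            = Real.exp (lam * (a i0 + (∑ l ∈ T, t l) * α i0))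
              / ∑ i, Real.exp (lam * (a i + (∑ l ∈ T, t l) * α i)) := rfl
        show QQ (fun i => a i + (∑ l ∈ T, t l) * α i)
            - FF (fun i => a i + (∑ l ∈ T, t l) * α i) = ∑ k ∈ T, ψ k t
        rw [hQQeq]
        linarith [hF]
      have hP01 := blind_sum_const T.card T le_rfl hTne P 2 hPB ψ hblind hid 0 1
      have e0 : (fun i => a i + (0:ℝ) * α i) = a := by funext i; ring
      have e1 : (fun i => a i + (1:ℝ) * α i) = a' := by
        funext i; rw [hαdef]; ring
      rw [hPdef] at hP01
      simp only [] at hP01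
      rw [e0, e1] at hP01
      exact hP01
  -- the constant value of QQ - FF
  have hncast : (2:ℝ) ≤ (n:ℝ) := by exact_mod_cast hn
  have hsumexp : ∀ x : ℝ, ∑ i, Real.exp (lam * (if i = i0 then x else 0))
      = Real.exp (lam * x) + ((n:ℝ) - 1) := by
    intro x
    rw [← Finset.sum_erase_add _ _ (Finset.mem_univ i0), if_pos rfl]
    have hone : ∀ i ∈ Finset.univ.erase i0,
        Real.exp (lam * (if i = i0 then x else 0)) = 1 := by
      intro i hi
      rw [if_neg (Finset.mem_erase.mp hi).1, mul_zero, Real.exp_zero]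
    have herase : ∑ i ∈ Finset.univ.erase i0,
        Real.exp (lam * (if i = i0 then x else 0)) = (n:ℝ) - 1 := by
      rw [Finset.sum_congr rfl hone, Finset.sum_const,
        Finset.card_erase_of_mem (Finset.mem_univ i0),
        Finset.card_univ, Fintype.card_fin, nsmul_eq_mul, mul_one,
        Nat.cast_sub (by omega : 1 ≤ n)]
      simp
    rw [herase]
    ring
  have hQQa : ∀ x : ℝ, QQ (fun i => if i = i0 then x else 0)
      = Real.exp (lam * x) / (Real.exp (lam * x) + ((n:ℝ) - 1)) := by
    intro x
    show Real.exp (lam * (if i0 = i0 then x else 0))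
        / ∑ i, Real.exp (lam * (if i = i0 then x else 0)) = _
    rw [if_pos rfl, hsumexp]
  set W1 : ℝ := ∑ k ∈ Tᶜ, w k with hW1def
  set a0 : Fin n → ℝ := fun _ => 0 with ha0def
  set c0 : ℝ := QQ a0 - FF a0 with hc0def
  have hc0 : ∀ a, QQ a - FF a = c0 := fun a => claimB a a0
  have hc0le : c0 ≤ 0 := by
    apply le_of_forall_pos_le_add
    intro ε hε
    set x := Real.log ε / lam with hxdef
    have hex : Real.exp (lam * x) = ε := by
      rw [hxdef, mul_comm, div_mul_cancel₀ _ (ne_of_gt hlam)]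
      exact Real.exp_log hε
    have h1 := hc0 (fun i => if i = i0 then x else 0)
    have hFFa := hFF0 (fun i => if i = i0 then x else 0)
    have hqq : QQ (fun i => if i = i0 then x else 0) ≤ ε := by
      rw [hQQa x, hex]
      exact div_le_self hε.le (by linarith)
    linarith
  have hc0ge : 1 - W1 ≤ c0 := by
    apply le_of_forall_pos_le_add
    intro ε hε
    have hd1 : (0:ℝ) < (n:ℝ) - 1 := by linarith
    set E := ((n:ℝ) - 1) / ε with hEdef
    have hEpos : 0 < E := div_pos hd1 hε
    set x := Real.log E / lam with hxdef
    have hex : Real.exp (lam * x) = E := by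
      rw [hxdef, mul_comm, div_mul_cancel₀ _ (ne_of_gt hlam)]
      exact Real.exp_log hEpos
    have h1 := hc0 (fun i => if i = i0 then x else 0)
    have hFFa : FF (fun i => if i = i0 then x else 0) ≤ W1 :=
      hFFW (fun i => if i = i0 then x else 0)
    have hqq : 1 - ε ≤ QQ (fun i => if i = i0 then x else 0) := by
      rw [hQQa x, hex]
      rw [le_div_iff₀ (by linarith : (0:ℝ) < E + ((n:ℝ) - 1))]
      have hEε : E * ε = (n:ℝ) - 1 := by
        rw [hEdef]
        field_simp
      nlinarith
    linarith
  have hW1ge : 1 ≤ W1 := by linarith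
  have hTsum0 : ∑ k ∈ T, w k = 0 := by
    have hsplit := Finset.sum_add_sum_compl T w
    rw [hw1] at hsplit
    have hnn : 0 ≤ ∑ k ∈ T, w k := Finset.sum_nonneg (fun k _ => hw0 k)
    rw [← hW1def] at hsplit
    linarith
  have hTw0 : ∀ k ∈ T, w k = 0 :=
    (Finset.sum_eq_zero_iff_of_nonneg (fun k _ => hw0 k)).mp hTsum0
  -- f depends only on the row player's payoff matrix
  have hU1only : ∀ (V : Matrix (Fin n) (Fin m) ℝ) (U2 U2' : Matrix (Fin n) (Fin m) ℝ),
      f (V, U2) = f (V, U2') := by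
    intro V U2 U2'
    funext i
    rw [hf, hf]
    apply Finset.sum_congr rfl
    intro k _
    by_cases hk : k ∈ T
    · rw [hTw0 k hk, zero_mul, zero_mul]
    · obtain ⟨hx, hy⟩ := hTc k hk
      have hmat : (fun (a2 : Fin n) (b2 : Fin m) =>
            θx k * ((V, U2) : Game n m).1 a2 b2 + θy k * ((V, U2) : Game n m).2 a2 b2)
          = (fun (a2 : Fin n) (b2 : Fin m) =>
            θx k * ((V, U2') : Game n m).1 a2 b2 + θy k * ((V, U2') : Game n m).2 a2 b2) := by
        funext i' j'
        show θx k * V i' j' + θy k * U2 i' j' = θx k * V i' j' + θy k * U2' i' j'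
        rw [hy]
        ring
      rw [hmat]
  -- the two final games
  set U1 : Matrix (Fin n) (Fin m) ℝ :=
    fun i j => if (i = i0 ∧ j = j0) ∨ (i = i1 ∧ j = j1) then 1 else 0 with hU1def
  have hU1row0 : ∀ j, U1 i0 j = if j = j0 then 1 else 0 := by
    intro j
    rw [hU1def]
    simp only []
    by_cases hj : j = j0
    · simp [hj]
    · simp [hj, hi01]
  have hU1row1 : ∀ j, U1 i1 j = if j = j1 then 1 else 0 := by
    intro j
    rw [hU1def]
    simp only []
    by_cases hj : j = j1
    · simp [hj, Ne.symm hi01]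
    · simp [hj, Ne.symm hi01]
  have hexp0 : ∀ G : Game n m, ∑ j, g G j * U1 i0 j = g G j0 := by
    intro G
    have hterm : ∀ j ∈ Finset.univ, g G j * U1 i0 j = if j = j0 then g G j else 0 :=
      fun j _ => by rw [hU1row0 j, mul_ite, mul_one, mul_zero]
    rw [Finset.sum_congr rfl hterm, Finset.sum_ite_eq' Finset.univ j0 (g G)]
    simp
  have hexp1 : ∀ G : Game n m, ∑ j, g G j * U1 i1 j = g G j1 := by
    intro G
    have hterm : ∀ j ∈ Finset.univ, g G j * U1 i1 j = if j = j1 then g G j else 0 :=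
      fun j _ => by rw [hU1row1 j, mul_ite, mul_one, mul_zero]
    rw [Finset.sum_congr rfl hterm, Finset.sum_ite_eq' Finset.univ j1 (g G)]
    simp
  set GA : Game n m := (U1, fun _ j => if j = j0 then ζ + 1 else 0) with hGAdef
  set GB : Game n m := (U1, fun _ j => if j = j1 then ζ + 1 else 0) with hGBdef
  have hgA : g GA j0 > g GA j1 := by
    refine hdom GA j0 ?_ j1 (Ne.symm hj01)
    intro j hj i
    show (if j0 = j0 then ζ + 1 else 0) > (if j = j0 then ζ + 1 else 0) + ζ
    rw [if_pos rfl, if_neg hj]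
    linarith
  have hgB : g GB j1 > g GB j0 := by
    refine hdom GB j1 ?_ j0 hj01
    intro j hj i
    show (if j1 = j1 then ζ + 1 else 0) > (if j = j1 then ζ + 1 else 0) + ζ
    rw [if_pos rfl, if_neg hj]
    linarith
  have hQBRlt : ∀ G : Game n m, G.1 = U1 → g G j1 < g G j0 →
      QBR G.1 (g G) lam i1 < QBR G.1 (g G) lam i0 := by
    intro G hG1 hglt
    simp only [QBR, hG1]
    have hD : 0 < ∑ i', Real.exp (lam * ∑ j, g G j * U1 i' j) :=
      Finset.sum_pos (fun _ _ => Real.exp_pos _) ⟨i0, Finset.mem_univ i0⟩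
    have hnum : Real.exp (lam * ∑ j, g G j * U1 i1 j)
        < Real.exp (lam * ∑ j, g G j * U1 i0 j) := by
      apply Real.exp_lt_exp.mpr
      rw [hexp0 G, hexp1 G]
      exact mul_lt_mul_of_pos_left hglt hlam
    exact div_lt_div_of_pos_right hnum hD
  have hQBRlt' : ∀ G : Game n m, G.1 = U1 → g G j0 < g G j1 →
      QBR G.1 (g G) lam i0 < QBR G.1 (g G) lam i1 := by
    intro G hG1 hglt
    simp only [QBR, hG1]
    have hD : 0 < ∑ i', Real.exp (lam * ∑ j, g G j * U1 i' j) :=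
      Finset.sum_pos (fun _ _ => Real.exp_pos _) ⟨i0, Finset.mem_univ i0⟩
    have hnum : Real.exp (lam * ∑ j, g G j * U1 i0 j)
        < Real.exp (lam * ∑ j, g G j * U1 i1 j) := by
      apply Real.exp_lt_exp.mpr
      rw [hexp0 G, hexp1 G]
      exact mul_lt_mul_of_pos_left hglt hlam
    exact div_lt_div_of_pos_right hnum hD
  have hfA : f GA i1 < f GA i0 := by
    rw [congrFun (hQ GA) i1, congrFun (hQ GA) i0]
    exact hQBRlt GA rfl hgA
  have hfB : f GB i0 < f GB i1 := by
    rw [congrFun (hQ GB) i0, congrFun (hQ GB) i1]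
    exact hQBRlt' GB rfl hgB
  have hfeq : f GA = f GB := by
    rw [hGAdef, hGBdef]
    exact hU1only U1 _ _
  have h1 := congrFun hfeq i0
  have h2 := congrFun hfeq i1
  linarith
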